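/- Let G be a group, B a left-invariant Boolean algebra on G such that for every B-type p and A ∈ B the set dp(A) = {x ∈ G : x⁻¹A ∈ p} lies in B. Then for types p, q ∈ S(B), the set p∗q = {A ∈ B : dq(A) ∈ p} is again a B-type, and ∗ is an associative operation on S(B) satisfying g(p∗q) = (gp)∗q for all g ∈ G. -/
import Mathlib


open Pointwise

/-- `p` is a `B`-type. -/
def IsBType {G : Type*} (B : Set (Set G)) (p : Set (Set G)) : Prop :=
  p ⊆ B ∧ ∅ ∉ p ∧ (∀ A ∈ p, ∀ A' ∈ p, A ∩ A' ∈ p) ∧ ∀ A ∈ B, A ∈ p ∨ Aᶜ ∈ p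

/-- The translate `gp = {gA : A ∈ p}`. -/
def typeSmul {G : Type*} [Group G] (g : G) (p : Set (Set G)) : Set (Set G) :=
  (fun A => g • A) '' p

/-- `dp(A) = {x ∈ G : x⁻¹A ∈ p}`. -/
def dSet {G : Type*} [Group G] (p : Set (Set G)) (A : Set G) : Set G :=
  {x : G | x⁻¹ • A ∈ p}

/-- `p ∗ q = {A ∈ B : dq(A) ∈ p}`. -/
def typeStar {G : Type*} [Group G] (B : Set (Set G)) (p q : Set (Set G)) : Set (Set G) :=
  {A | A ∈ B ∧ dSet q A ∈ p}

section Aux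

variable {G : Type*} [Group G]

lemma mem_typeSmul {g : G} {p : Set (Set G)} {A : Set G} :
    A ∈ typeSmul g p ↔ g⁻¹ • A ∈ p := by
  constructor
  · rintro ⟨T, hT, rfl⟩; simpa [inv_smul_smul] using hT
  · intro h; exact ⟨g⁻¹ • A, h, by simp [smul_inv_smul]⟩

lemma dSet_smul (q : Set (Set G)) (g : G) (A : Set G) :
    dSet q (g • A) = g • dSet q A := by
  ext x
  simp [dSet, Set.mem_smul_set_iff_inv_smul_mem, smul_smul, mul_inv_rev]

lemma IsBType.mono {B p : Set (Set G)} (hp : IsBType B p) {A A' : Set G}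
    (hA : A ∈ p) (hA' : A' ∈ B) (hs : A ⊆ A') : A' ∈ p := by
  rcases hp.2.2.2 A' hA' with h | h
  · exact h
  · exfalso
    have h2 := hp.2.2.1 A hA A'ᶜ h
    have h3 : A ∩ A'ᶜ = ∅ := by
      ext x
      simp only [Set.mem_inter_iff, Set.mem_compl_iff, Set.mem_empty_iff_false, iff_false,
        not_and, not_not]
      exact fun hx => hs hx
    rw [h3] at h2
    exact hp.2.1 h2

lemma IsBType.compl_mem_iff {B p : Set (Set G)} (hp : IsBType B p) {A : Set G} (hA : A ∈ B) :
    Aᶜ ∈ p ↔ A ∉ p := by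
  constructor
  · intro h hA'
    have h2 := hp.2.2.1 A hA' Aᶜ h
    rw [Set.inter_compl_self] at h2
    exact hp.2.1 h2
  · intro h
    rcases hp.2.2.2 A hA with h' | h'
    · exact absurd h' h
    · exact h'

lemma dSet_compl {B q : Set (Set G)} (hq : IsBType B q)
    (hinv : ∀ (g : G), ∀ A ∈ B, g • A ∈ B) {A : Set G} (hA : A ∈ B) :
    dSet q Aᶜ = (dSet q A)ᶜ := by
  ext x
  have h1 : x⁻¹ • Aᶜ = (x⁻¹ • A)ᶜ := Set.smul_set_compl
  simp only [dSet, Set.mem_setOf_eq, Set.mem_compl_iff, h1]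
  exact hq.compl_mem_iff (hinv _ _ hA)

lemma dSet_inter {B q : Set (Set G)} (hq : IsBType B q)
    (hinv : ∀ (g : G), ∀ A ∈ B, g • A ∈ B) {A A' : Set G} (hA : A ∈ B) (hA' : A' ∈ B) :
    dSet q (A ∩ A') = dSet q A ∩ dSet q A' := by
  ext x
  have h1 : x⁻¹ • (A ∩ A') = x⁻¹ • A ∩ x⁻¹ • A' := Set.smul_set_inter
  simp only [dSet, Set.mem_setOf_eq, Set.mem_inter_iff, h1]
  constructor
  · intro h
    exact ⟨hq.mono h (hinv _ _ hA) Set.inter_subset_left,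
      hq.mono h (hinv _ _ hA') Set.inter_subset_right⟩
  · intro h
    exact hq.2.2.1 _ h.1 _ h.2

lemma dSet_empty {B q : Set (Set G)} (hq : IsBType B q) : dSet q (∅ : Set G) = ∅ := by
  ext x
  simp [dSet, Set.smul_set_empty, hq.2.1]

end Aux

theorem star_semigroup {G : Type*} [Group G] (B : Set (Set G))
    (huniv : Set.univ ∈ B) (hcompl : ∀ A ∈ B, Aᶜ ∈ B)
    (hinter : ∀ A ∈ B, ∀ A' ∈ B, A ∩ A' ∈ B)
    (hinv : ∀ (g : G), ∀ A ∈ B, g • A ∈ B)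
    (hd : ∀ (p : Set (Set G)), IsBType B p → ∀ A ∈ B, dSet p A ∈ B) :
    (∀ p q : Set (Set G), IsBType B p → IsBType B q → IsBType B (typeStar B p q)) ∧
      (∀ p q r : Set (Set G), IsBType B p → IsBType B q → IsBType B r →
        typeStar B p (typeStar B q r) = typeStar B (typeStar B p q) r) ∧
      ∀ (g : G) (p q : Set (Set G)), IsBType B p → IsBType B q →
        typeSmul g (typeStar B p q) = typeStar B (typeSmul g p) q := by
  refine ⟨?_, ?_, ?_⟩
  · -- typeStar is a B-type
    intro p q hp hq
    refine ⟨fun A hA => hA.1, ?_, ?_, ?_⟩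
    · rintro ⟨-, h⟩
      rw [dSet_empty hq] at h
      exact hp.2.1 h
    · rintro A ⟨hAB, hAp⟩ A' ⟨hA'B, hA'p⟩
      refine ⟨hinter _ hAB _ hA'B, ?_⟩
      rw [dSet_inter hq hinv hAB hA'B]
      exact hp.2.2.1 _ hAp _ hA'p
    · intro A hA
      rcases hp.2.2.2 (dSet q A) (hd q hq A hA) with h | h
      · exact Or.inl ⟨hA, h⟩
      · refine Or.inr ⟨hcompl A hA, ?_⟩
        rw [dSet_compl hq hinv hA]
        exact h
  · -- associativity
    intro p q r hp hq hr
    have key : ∀ A ∈ B, dSet (typeStar B q r) A = dSet q (dSet r A) := by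
      intro A hA
      ext x
      have e : dSet r (x⁻¹ • A) = x⁻¹ • dSet r A := dSet_smul r x⁻¹ A
      constructor
      · intro hx
        have h2 : dSet r (x⁻¹ • A) ∈ q := (show x⁻¹ • A ∈ typeStar B q r from hx).2
        rw [e] at h2
        exact h2
      · intro hx
        have hxq : x⁻¹ • dSet r A ∈ q := hx
        exact ⟨hinv x⁻¹ A hA, by rw [e]; exact hxq⟩
    ext A
    constructor
    · rintro ⟨hAB, h⟩
      refine ⟨hAB, hd r hr A hAB, ?_⟩
      rw [← key A hAB]
      exact h
    · rintro ⟨hAB, -, h⟩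
      refine ⟨hAB, ?_⟩
      rw [key A hAB]
      exact h
  · -- equivariance
    intro g p q hp hq
    ext A
    rw [mem_typeSmul]
    simp only [typeStar, Set.mem_setOf_eq, mem_typeSmul]
    rw [dSet_smul]
    constructor
    · rintro ⟨hAB, h⟩
      have h2 := hinv g (g⁻¹ • A) hAB
      rw [smul_inv_smul] at h2
      exact ⟨h2, h⟩
    · rintro ⟨hAB, h⟩
      exact ⟨hinv g⁻¹ A hAB, h⟩
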